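/- Let X be a finite set and let R be an ℛ-class in the semigroup of bi-typed partial maps on X (with the domain-restricting composition). Then R is a regular ℛ-class (i.e., contains a regular element) if and only if R contains a partial identity id_A for some disjoint pair of subsets A = (A_ex, A_fr) of X. -/

import Mathlib

open scoped Classical

structure BiMap (X : Type*) where
  ex : Set X
  fr : Set X
  disj : ex ∩ fr = ∅
  toFun : X → X
  eq_outside : ∀ x, x ∉ ex ∪ fr → toFun x = x

noncomputable def BiMap.comp {X : Type*} (g f : BiMap X) : BiMap X where
  ex := {x | x ∈ f.ex ∧ f.toFun x ∈ g.ex}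
  fr := {x | x ∈ f.fr ∧ f.toFun x ∈ g.fr}
  disj := by
    ext x
    constructor
    · rintro ⟨⟨h1, _⟩, h2, _⟩
      have hx : x ∈ f.ex ∩ f.fr := ⟨h1, h2⟩
      rw [f.disj] at hx
      exact hx
    · intro hx
      exact absurd hx (Set.notMem_empty x)
  toFun := fun x =>
    if (x ∈ f.ex ∧ f.toFun x ∈ g.ex) ∨ (x ∈ f.fr ∧ f.toFun x ∈ g.fr) then
      g.toFun (f.toFun x)
    else x
  eq_outside := by
    intro x hx
    exact if_neg (fun hc => hx (by simpa using hc))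

def BiMap.pid {X : Type*} (Aex Afr : Set X) (h : Aex ∩ Afr = ∅) : BiMap X :=
  ⟨Aex, Afr, h, id, fun _ _ => rfl⟩

def BiMap.glL {X : Type*} (f g : BiMap X) : Prop :=
  ({h | ∃ s, h = BiMap.comp s f} ∪ {f}) = ({h | ∃ s, h = BiMap.comp s g} ∪ {g})

def BiMap.glR {X : Type*} (f g : BiMap X) : Prop :=
  ({h | ∃ s, h = BiMap.comp f s} ∪ {f}) = ({h | ∃ s, h = BiMap.comp g s} ∪ {g})

def BiMap.glD {X : Type*} (f g : BiMap X) : Prop :=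
  ∃ h, BiMap.glL f h ∧ BiMap.glR h g

lemma BiMap.ext' {X : Type*} {f g : BiMap X} (h1 : f.ex = g.ex) (h2 : f.fr = g.fr)
    (h3 : f.toFun = g.toFun) : f = g := by
  cases f; cases g; simp_all

lemma BiMap.mem_comp_ex {X : Type*} {g f : BiMap X} {x : X} :
    x ∈ (BiMap.comp g f).ex ↔ x ∈ f.ex ∧ f.toFun x ∈ g.ex := Iff.rfl

lemma BiMap.mem_comp_fr {X : Type*} {g f : BiMap X} {x : X} :
    x ∈ (BiMap.comp g f).fr ↔ x ∈ f.fr ∧ f.toFun x ∈ g.fr := Iff.rfl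

lemma BiMap.comp_toFun_of_ex {X : Type*} {g f : BiMap X} {x : X}
    (h : x ∈ (BiMap.comp g f).ex) : (BiMap.comp g f).toFun x = g.toFun (f.toFun x) :=
  if_pos (Or.inl h)

lemma BiMap.comp_toFun_of_fr {X : Type*} {g f : BiMap X} {x : X}
    (h : x ∈ (BiMap.comp g f).fr) : (BiMap.comp g f).toFun x = g.toFun (f.toFun x) :=
  if_pos (Or.inr h)

lemma BiMap.comp_assoc {X : Type*} (a b c : BiMap X) :
    BiMap.comp (BiMap.comp a b) c = BiMap.comp a (BiMap.comp b c) := by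
  have hex : (BiMap.comp (BiMap.comp a b) c).ex = (BiMap.comp a (BiMap.comp b c)).ex := by
    ext x
    rw [BiMap.mem_comp_ex, BiMap.mem_comp_ex, BiMap.mem_comp_ex, BiMap.mem_comp_ex]
    constructor
    · rintro ⟨hc, hb, ha⟩
      refine ⟨⟨hc, hb⟩, ?_⟩
      rwa [BiMap.comp_toFun_of_ex ⟨hc, hb⟩]
    · rintro ⟨⟨hc, hb⟩, ha⟩
      rw [BiMap.comp_toFun_of_ex ⟨hc, hb⟩] at ha
      exact ⟨hc, hb, ha⟩
  have hfr : (BiMap.comp (BiMap.comp a b) c).fr = (BiMap.comp a (BiMap.comp b c)).fr := by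
    ext x
    rw [BiMap.mem_comp_fr, BiMap.mem_comp_fr, BiMap.mem_comp_fr, BiMap.mem_comp_fr]
    constructor
    · rintro ⟨hc, hb, ha⟩
      refine ⟨⟨hc, hb⟩, ?_⟩
      rwa [BiMap.comp_toFun_of_fr ⟨hc, hb⟩]
    · rintro ⟨⟨hc, hb⟩, ha⟩
      rw [BiMap.comp_toFun_of_fr ⟨hc, hb⟩] at ha
      exact ⟨hc, hb, ha⟩
  refine BiMap.ext' hex hfr ?_
  funext x
  by_cases h1 : x ∈ (BiMap.comp (BiMap.comp a b) c).ex
  · obtain ⟨hc, hb, ha⟩ := BiMap.mem_comp_ex.mp h1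
    have h1' : x ∈ (BiMap.comp a (BiMap.comp b c)).ex := hex ▸ h1
    rw [BiMap.comp_toFun_of_ex h1, BiMap.comp_toFun_of_ex ⟨hb, ha⟩,
      BiMap.comp_toFun_of_ex h1', BiMap.comp_toFun_of_ex ⟨hc, hb⟩]
  · by_cases h2 : x ∈ (BiMap.comp (BiMap.comp a b) c).fr
    · obtain ⟨hc, hb, ha⟩ := BiMap.mem_comp_fr.mp h2
      have h2' : x ∈ (BiMap.comp a (BiMap.comp b c)).fr := hfr ▸ h2
      rw [BiMap.comp_toFun_of_fr h2, BiMap.comp_toFun_of_fr ⟨hb, ha⟩,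
        BiMap.comp_toFun_of_fr h2', BiMap.comp_toFun_of_fr ⟨hc, hb⟩]
    · have hout : x ∉ (BiMap.comp (BiMap.comp a b) c).ex ∪ (BiMap.comp (BiMap.comp a b) c).fr := by
        simp [h1, h2]
      rw [(BiMap.comp (BiMap.comp a b) c).eq_outside x hout,
        (BiMap.comp a (BiMap.comp b c)).eq_outside x (by rw [← hex, ← hfr]; exact hout)]

lemma BiMap.glR_of {X : Type*} {a b : BiMap X} (x y : BiMap X)
    (hx : a = BiMap.comp b x) (hy : b = BiMap.comp a y) : BiMap.glR a b := by
  unfold BiMap.glR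
  ext h
  simp only [Set.mem_union, Set.mem_setOf_eq, Set.mem_singleton_iff]
  constructor
  · rintro (⟨s, rfl⟩ | rfl)
    · exact Or.inl ⟨x.comp s, by rw [hx, BiMap.comp_assoc]⟩
    · exact Or.inl ⟨x, hx⟩
  · rintro (⟨s, rfl⟩ | rfl)
    · exact Or.inl ⟨y.comp s, by rw [hy, BiMap.comp_assoc]⟩
    · exact Or.inl ⟨y, hy⟩

lemma BiMap.pid_idem {X : Type*} (Aex Afr : Set X) (h : Aex ∩ Afr = ∅) :
    BiMap.comp (BiMap.pid Aex Afr h) (BiMap.pid Aex Afr h) = BiMap.pid Aex Afr h := by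
  apply BiMap.ext'
  · ext x; simp [BiMap.comp, BiMap.pid]
  · ext x; simp [BiMap.comp, BiMap.pid]
  · funext x
    simp only [BiMap.comp, BiMap.pid, id_eq]
    split_ifs <;> simp

/-- An ℛ-class in the semigroup of bi-typed partial maps on a finite set is regular
iff it contains a partial identity. -/
theorem BiMap.Rclass_regular_iff_pid {X : Type*} [Finite X] (f : BiMap X) :
    (∃ g : BiMap X, BiMap.glR g f ∧ ∃ h : BiMap X, BiMap.comp (BiMap.comp g h) g = g) ↔
    (∃ (Aex Afr : Set X) (hd : Aex ∩ Afr = ∅), BiMap.glR (BiMap.pid Aex Afr hd) f) := by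
  constructor
  · rintro ⟨g, hgf, h, hreg⟩
    set e := BiMap.comp g h with he_def
    -- e is idempotent
    have he : BiMap.comp e e = e := by
      rw [he_def, ← BiMap.comp_assoc, hreg]
    -- domain stability facts
    have hex_sub : ∀ x ∈ e.ex, e.toFun x ∈ e.ex := by
      intro x hx
      have := congrArg BiMap.ex he
      rw [Set.ext_iff] at this
      exact ((this x).mpr hx).2
    have hfr_sub : ∀ x ∈ e.fr, e.toFun x ∈ e.fr := by
      intro x hx
      have := congrArg BiMap.fr he
      rw [Set.ext_iff] at this
      exact ((this x).mpr hx).2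
    have hfun := congrArg BiMap.toFun he
    have hfix_ex : ∀ x ∈ e.ex, e.toFun (e.toFun x) = e.toFun x := by
      intro x hx
      have := congrFun hfun x
      simp only [BiMap.comp] at this
      rwa [if_pos (Or.inl ⟨hx, hex_sub x hx⟩)] at this
    have hfix_fr : ∀ x ∈ e.fr, e.toFun (e.toFun x) = e.toFun x := by
      intro x hx
      have := congrFun hfun x
      simp only [BiMap.comp] at this
      rwa [if_pos (Or.inr ⟨hx, hfr_sub x hx⟩)] at this
    -- the partial identity on the image of e
    have hdisj : (e.toFun '' e.ex) ∩ (e.toFun '' e.fr) = ∅ := by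
      ext z
      simp only [Set.mem_inter_iff, Set.mem_image, Set.mem_empty_iff_false, iff_false]
      rintro ⟨⟨x, hx, rfl⟩, ⟨y, hy, hzy⟩⟩
      have h1 : e.toFun x ∈ e.ex := hex_sub x hx
      have h2 : e.toFun x ∈ e.fr := hzy ▸ hfr_sub y hy
      have : e.toFun x ∈ e.ex ∩ e.fr := ⟨h1, h2⟩
      rw [e.disj] at this
      exact this
    set p := BiMap.pid (e.toFun '' e.ex) (e.toFun '' e.fr) hdisj with hp_def
    have himg_ex : e.toFun '' e.ex ⊆ e.ex := by
      rintro z ⟨x, hx, rfl⟩; exact hex_sub x hx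
    have himg_fr : e.toFun '' e.fr ⊆ e.fr := by
      rintro z ⟨x, hx, rfl⟩; exact hfr_sub x hx
    -- comp e p = p
    have hep : BiMap.comp e p = p := by
      apply BiMap.ext'
      · ext x
        simp only [BiMap.comp, hp_def, BiMap.pid, Set.mem_setOf_eq, id_eq]
        exact ⟨fun ⟨h1, _⟩ => h1, fun h1 => ⟨h1, himg_ex h1⟩⟩
      · ext x
        simp only [BiMap.comp, hp_def, BiMap.pid, Set.mem_setOf_eq, id_eq]
        exact ⟨fun ⟨h1, _⟩ => h1, fun h1 => ⟨h1, himg_fr h1⟩⟩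
      · funext x
        simp only [BiMap.comp, hp_def, BiMap.pid, id_eq]
        by_cases h1 : x ∈ e.toFun '' e.ex
        · rw [if_pos (Or.inl ⟨h1, himg_ex h1⟩)]
          obtain ⟨y, hy, rfl⟩ := h1
          exact hfix_ex y hy
        · by_cases h2 : x ∈ e.toFun '' e.fr
          · rw [if_pos (Or.inr ⟨h2, himg_fr h2⟩)]
            obtain ⟨y, hy, rfl⟩ := h2
            exact hfix_fr y hy
          · rw [if_neg]
            rintro (⟨ha, _⟩ | ⟨ha, _⟩)
            · exact h1 ha
            · exact h2 ha
    -- comp p e = e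
    have hpe : BiMap.comp p e = e := by
      apply BiMap.ext'
      · ext x
        simp only [BiMap.comp, hp_def, BiMap.pid, Set.mem_setOf_eq]
        exact ⟨fun ⟨h1, _⟩ => h1, fun h1 => ⟨h1, ⟨x, h1, rfl⟩⟩⟩
      · ext x
        simp only [BiMap.comp, hp_def, BiMap.pid, Set.mem_setOf_eq]
        exact ⟨fun ⟨h1, _⟩ => h1, fun h1 => ⟨h1, ⟨x, h1, rfl⟩⟩⟩
      · funext x
        simp only [BiMap.comp, hp_def, BiMap.pid, id_eq]
        by_cases h1 : x ∈ e.ex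
        · rw [if_pos (Or.inl ⟨h1, ⟨x, h1, rfl⟩⟩)]
        · by_cases h2 : x ∈ e.fr
          · rw [if_pos (Or.inr ⟨h2, ⟨x, h2, rfl⟩⟩)]
          · rw [if_neg, e.eq_outside x (by simp [h1, h2])]
            rintro (⟨ha, _⟩ | ⟨ha, _⟩)
            · exact h1 ha
            · exact h2 ha
    -- e * g = g
    have heg : BiMap.comp e g = g := hreg
    -- glR p g
    have hpg2 : BiMap.comp p g = g := by
      rw [← hreg, ← BiMap.comp_assoc, hpe]
    have hpg : BiMap.glR p g := by
      apply BiMap.glR_of (BiMap.comp h p) g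
      · rw [← BiMap.comp_assoc, ← he_def, hep]
      · exact hpg2.symm
    exact ⟨_, _, hdisj, hpg.trans hgf⟩
  · rintro ⟨Aex, Afr, hd, hpf⟩
    exact ⟨BiMap.pid Aex Afr hd, hpf, BiMap.pid Aex Afr hd, by
      rw [BiMap.pid_idem, BiMap.pid_idem]⟩
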